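/- For any separable metrizable spaces X and Y, the space C_k(X,Y) of continuous maps with the compact-open topology has a countable Pytkeev network. -/

import Mathlib

open Set Filter Topology TopologicalSpace

/-- A set `A` accumulates at `x` if every neighborhood of `x` contains
infinitely many points of `A`. -/
def AccumulatesAt {X : Type*} [TopologicalSpace X] (A : Set X) (x : X) : Prop :=
  ∀ U ∈ 𝓝 x, (U ∩ A).Infinite

/-- `𝒩` is a network: for each point and open neighborhood there is a member of `𝒩`
containing the point and contained in the neighborhood. -/
def IsNetwork {X : Type*} [TopologicalSpace X] (𝒩 : Set (Set X)) : Prop :=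
  ∀ (x : X) (U : Set X), IsOpen U → x ∈ U → ∃ N ∈ 𝒩, x ∈ N ∧ N ⊆ U

/-- `𝒩` is a Pytkeev network. -/
def IsPytkeevNetwork {X : Type*} [TopologicalSpace X] (𝒩 : Set (Set X)) : Prop :=
  IsNetwork 𝒩 ∧ ∀ (x : X) (U : Set X), IsOpen U → x ∈ U →
    ∀ A : Set X, AccumulatesAt A x → ∃ N ∈ 𝒩, N ⊆ U ∧ (N ∩ A).Infinite

/-- `𝒩` is a k-network. -/
def IsKNetwork {X : Type*} [TopologicalSpace X] (𝒩 : Set (Set X)) : Prop :=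
  ∀ (U K : Set X), IsOpen U → IsCompact K → K ⊆ U →
    ∃ F ⊆ 𝒩, F.Finite ∧ K ⊆ ⋃₀ F ∧ ⋃₀ F ⊆ U

/-- In a space with only (at most) one point, `{univ}` is a countable Pytkeev network. -/
theorem subsingleton_pytkeevNetwork {Z : Type*} [TopologicalSpace Z] (h : Subsingleton Z) :
    ∃ 𝒩 : Set (Set Z), 𝒩.Countable ∧ IsPytkeevNetwork 𝒩 := by
  refine ⟨{Set.univ}, countable_singleton _, ?_, ?_⟩
  · intro x U hU hx
    refine ⟨Set.univ, rfl, trivial, fun y _ => ?_⟩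
    have : y = x := Subsingleton.elim y x
    rwa [this]
  · intro x U hU hx A hA
    exfalso
    have : (Set.univ ∩ A).Infinite := hA _ univ_mem
    exact this (Set.toFinite _)

/-- The core construction: for metric `X`, `Y` with `X` second countable and `Y` separable,
the compact-open topology on `C(X, Y)` has a countable Pytkeev network. -/
theorem aux_pytkeev {X Y : Type*} [MetricSpace X] [MetricSpace Y]
    [SecondCountableTopology X] [SeparableSpace Y] [Nonempty X] [Nonempty Y] :
    ∃ 𝒩 : Set (Set C(X, Y)), 𝒩.Countable ∧ IsPytkeevNetwork 𝒩 := by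
  classical
  -- a countable family of open sets forming a basis (possibly with `∅` repeated)
  obtain ⟨b, hbopen, hbbasis⟩ : ∃ b : ℕ → Set X, (∀ n, IsOpen (b n)) ∧
      ∀ (x : X) (U : Set X), IsOpen U → x ∈ U → ∃ n, x ∈ b n ∧ b n ⊆ U := by
    obtain ⟨B, hBc, hBne, hB⟩ := exists_countable_basis X
    obtain ⟨b, hb⟩ := (hBc.insert ∅).exists_eq_range (insert_nonempty _ _)
    refine ⟨b, fun n => ?_, fun x U hU hx => ?_⟩
    · have hmem : b n ∈ insert (∅ : Set X) B := by rw [hb]; exact mem_range_self n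
      rcases mem_insert_iff.1 hmem with h | h
      · rw [h]; exact isOpen_empty
      · exact hB.isOpen h
    · obtain ⟨v, hvB, hxv, hvU⟩ := hB.exists_subset_of_mem_open hx hU
      have hmem : v ∈ insert (∅ : Set X) B := mem_insert_of_mem _ hvB
      rw [hb] at hmem
      obtain ⟨n, rfl⟩ := hmem
      exact ⟨n, hxv, hvU⟩
  -- a countable dense sequence in Y
  set c : ℕ → Y := denseSeq Y with hc_def
  have hc : DenseRange c := denseRange_denseSeq Y
  -- basis of neighborhoods in the compact-open topology
  have hnhds : ∀ f : C(X, Y), (𝓝 f).HasBasis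
      (fun p : Set X × ℝ => IsCompact p.1 ∧ 0 < p.2)
      (fun p => {g : C(X, Y) | ∀ x ∈ p.1, dist (f x) (g x) < p.2}) := by
    intro f
    have h2 := (Metric.uniformity_basis_dist (α := Y)).compactConvergenceUniformity (α := X)
    exact nhds_basis_uniformity' h2
  -- the candidate network
  set Ns : Finset (ℕ × ℕ) → ℚ → Set C(X, Y) := fun s r =>
    {g | ∀ p ∈ s, Set.MapsTo g (b p.1) (Metric.ball (c p.2) (r : ℝ))} with hNs_def
  refine ⟨Set.range (fun q : Finset (ℕ × ℕ) × ℚ => Ns q.1 q.2), Set.countable_range _, ?_⟩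
  -- the covering construction
  have cover : ∀ (f : C(X, Y)) (K : Set X), IsCompact K → ∀ r : ℚ, 0 < (r : ℝ) →
      ∀ η : ℝ, 0 < η →
      ∃ s : Finset (ℕ × ℕ), (K ⊆ ⋃ p ∈ s, b p.1) ∧
        (∀ p ∈ s, ∀ x ∈ b p.1, dist (f x) (c p.2) < (r : ℝ) / 2) ∧
        (∀ p ∈ s, ∀ x ∈ b p.1, ∃ y ∈ K, dist x y < η) := by
    intro f K hK r hr η hη
    have hstep : ∀ x, x ∈ K → ∃ nm : ℕ × ℕ, x ∈ b nm.1 ∧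
        (∀ x' ∈ b nm.1, dist (f x') (c nm.2) < (r : ℝ) / 2) ∧
        (∀ x' ∈ b nm.1, dist x' x < η) := by
      intro x hx
      obtain ⟨m, hm⟩ : ∃ m, dist (f x) (c m) < (r : ℝ) / 4 :=
        hc.exists_dist_lt (f x) (by positivity)
      have hUopen : IsOpen (Metric.ball x η ∩ f ⁻¹' Metric.ball (c m) ((r : ℝ) / 2)) :=
        (Metric.isOpen_ball).inter (Metric.isOpen_ball.preimage f.continuous)
      have hxU : x ∈ Metric.ball x η ∩ f ⁻¹' Metric.ball (c m) ((r : ℝ) / 2) := by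
        refine ⟨Metric.mem_ball_self hη, ?_⟩
        simp only [Set.mem_preimage, Metric.mem_ball]
        linarith
      obtain ⟨n, hxn, hsub⟩ := hbbasis x _ hUopen hxU
      refine ⟨(n, m), hxn, fun x' hx' => ?_, fun x' hx' => ?_⟩
      · have := (hsub hx').2
        simpa only [Set.mem_preimage, Metric.mem_ball] using this
      · have := (hsub hx').1
        simpa only [Metric.mem_ball] using this
    choose nm hnm1 hnm2 hnm3 using hstep
    obtain ⟨t, ht⟩ := hK.elim_finite_subcover (fun z : K => b (nm z.1 z.2).1)
      (fun z => hbopen _) (fun x hx => mem_iUnion.2 ⟨⟨x, hx⟩, hnm1 x hx⟩)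
    refine ⟨t.image (fun z => nm z.1 z.2), ?_, ?_, ?_⟩
    · intro x hx
      obtain ⟨z, hzt, hxz⟩ := mem_iUnion₂.1 (ht hx)
      exact mem_iUnion₂.2 ⟨nm z.1 z.2, Finset.mem_image.2 ⟨z, hzt, rfl⟩, hxz⟩
    · intro p hp x hx
      obtain ⟨z, hzt, rfl⟩ := Finset.mem_image.1 hp
      exact hnm2 z.1 z.2 x hx
    · intro p hp x hx
      obtain ⟨z, hzt, rfl⟩ := Finset.mem_image.1 hp
      exact ⟨z.1, z.2, hnm3 z.1 z.2 x hx⟩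
  -- `Ns s r` is inside the `(K, δ)`-neighborhood of `f` for admissible `s`
  have hNsub : ∀ (f : C(X, Y)) (K : Set X) (r : ℚ) (δ : ℝ), 0 < (r : ℝ) → 2 * (r : ℝ) < δ →
      ∀ s : Finset (ℕ × ℕ), (K ⊆ ⋃ p ∈ s, b p.1) →
      (∀ p ∈ s, ∀ x ∈ b p.1, dist (f x) (c p.2) < (r : ℝ) / 2) →
      Ns s r ⊆ {g : C(X, Y) | ∀ x ∈ K, dist (f x) (g x) < δ} := by
    intro f K r δ hr0 hrδ s hsc hsf g hg x hx
    obtain ⟨p, hp, hxp⟩ := mem_iUnion₂.1 (hsc hx)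
    have h1 : dist (f x) (c p.2) < (r : ℝ) / 2 := hsf p hp x hxp
    have h2 : dist (g x) (c p.2) < (r : ℝ) := by
      have := hg p hp hxp
      simpa only [Metric.mem_ball] using this
    have h3 : dist (f x) (g x) ≤ dist (f x) (c p.2) + dist (g x) (c p.2) :=
      dist_triangle_right _ _ _
    show dist (f x) (g x) < δ
    linarith
  constructor
  -- Network property
  · intro f O hO hfO
    obtain ⟨⟨K, δ⟩, ⟨hK, hδ⟩, hWO⟩ := (hnhds f).mem_iff.1 (hO.mem_nhds hfO)
    obtain ⟨r, hr0, hrδ⟩ : ∃ r : ℚ, 0 < (r : ℝ) ∧ 2 * (r : ℝ) < δ := by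
      obtain ⟨r, h1, h2⟩ := exists_rat_btwn (by linarith : (0 : ℝ) < δ / 2)
      exact ⟨r, h1, by linarith⟩
    obtain ⟨s, hsc, hsf, -⟩ := cover f K hK r hr0 1 one_pos
    refine ⟨Ns s r, ⟨(s, r), rfl⟩, ?_, (hNsub f K r δ hr0 hrδ s hsc hsf).trans hWO⟩
    intro p hp x hx
    have := hsf p hp x hx
    simp only [Metric.mem_ball]
    linarith
  -- Pytkeev property
  · intro f O hO hfO A hA
    by_contra hcon
    push_neg at hcon
    obtain ⟨⟨K, δ⟩, ⟨hK, hδ⟩, hWO⟩ := (hnhds f).mem_iff.1 (hO.mem_nhds hfO)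
    obtain ⟨r, hr0, hrδ⟩ : ∃ r : ℚ, 0 < (r : ℝ) ∧ 2 * (r : ℝ) < δ := by
      obtain ⟨r, h1, h2⟩ := exists_rat_btwn (by linarith : (0 : ℝ) < δ / 2)
      exact ⟨r, h1, by linarith⟩
    -- every admissible `s` catches only finitely many elements of A
    have key : ∀ s : Finset (ℕ × ℕ), (K ⊆ ⋃ p ∈ s, b p.1) →
        (∀ p ∈ s, ∀ x ∈ b p.1, dist (f x) (c p.2) < (r : ℝ) / 2) →
        (Ns s r ∩ A).Finite := by
      intro s hsc hsf
      by_contra hinf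
      exact hinf (hcon (Ns s r) ⟨(s, r), rfl⟩ ((hNsub f K r δ hr0 hrδ s hsc hsf).trans hWO))
    -- the deviation sets
    set Z : C(X, Y) → Set X := fun g => {x | (r : ℝ) / 2 ≤ dist (g x) (f x)} with hZ_def
    have hZclosed : ∀ g, IsClosed (Z g) := fun g =>
      isClosed_le continuous_const (g.continuous.dist f.continuous)
    -- functions whose deviation set keeps distance ≥ 1/(m+1) from K
    set G : ℕ → Set C(X, Y) := fun m =>
      {g | g ∈ A ∧ (Z g).Nonempty ∧ ∀ z ∈ Z g, ∀ y ∈ K, 1 / (m + 1 : ℝ) ≤ dist z y} with hG_def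
    have hGmono : ∀ {m m' : ℕ}, m ≤ m' → G m ⊆ G m' := by
      intro m m' h g hg
      refine ⟨hg.1, hg.2.1, fun z hz y hy => le_trans ?_ (hg.2.2 z hz y hy)⟩
      have h1 : (0 : ℝ) < m + 1 := by positivity
      have h2 : (m : ℝ) + 1 ≤ (m' : ℝ) + 1 := by exact_mod_cast by omega
      exact one_div_le_one_div_of_le h1 h2
    have hGfin : ∀ m, (G m).Finite := by
      intro m
      obtain ⟨s, hsc, hsf, hsnear⟩ := cover f K hK r hr0 (1 / (m + 1 : ℝ)) (by positivity)
      refine (key s hsc hsf).subset ?_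
      intro g hg
      refine ⟨?_, hg.1⟩
      intro p hp x hx
      have hxZ : x ∉ Z g := by
        intro hxZ
        obtain ⟨y, hy, hxy⟩ := hsnear p hp x hx
        exact absurd hxy (not_lt.2 (hg.2.2 x hxZ y hy))
      have h1 : dist (g x) (f x) < (r : ℝ) / 2 := lt_of_not_ge hxZ
      have h2 : dist (f x) (c p.2) < (r : ℝ) / 2 := hsf p hp x hx
      simp only [Metric.mem_ball]
      calc dist (g x) (c p.2) ≤ dist (g x) (f x) + dist (f x) (c p.2) := dist_triangle _ _ _
        _ < (r : ℝ) := by linarith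
    -- every deviating function avoiding K belongs to some G m
    have hmem : ∀ g, g ∈ A → (Z g).Nonempty → (∀ x ∈ Z g, x ∉ K) → ∃ m, g ∈ G m := by
      intro g hgA hgne hgK
      by_contra h
      push_neg at h
      have h' : ∀ m : ℕ, ∃ z ∈ Z g, ∃ y ∈ K, dist z y < 1 / (m + 1 : ℝ) := by
        intro m
        have hm := h m
        simp only [hG_def, Set.mem_setOf_eq, not_and] at hm
        have := hm hgA hgne
        push_neg at this
        exact this
      choose z hz y hy hzy using h'
      obtain ⟨k, hkK, φ, hφ, hyk⟩ := hK.tendsto_subseq hy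
      have hzk : Tendsto (fun i => z (φ i)) atTop (𝓝 k) := by
        rw [tendsto_iff_dist_tendsto_zero]
        have hbound : ∀ i, dist (z (φ i)) k ≤ 1 / (i + 1 : ℝ) + dist (y (φ i)) k := by
          intro i
          have h1 : dist (z (φ i)) k ≤ dist (z (φ i)) (y (φ i)) + dist (y (φ i)) k :=
            dist_triangle _ _ _
          have h2 : dist (z (φ i)) (y (φ i)) < 1 / (φ i + 1 : ℝ) := hzy (φ i)
          have h3 : 1 / (φ i + 1 : ℝ) ≤ 1 / (i + 1 : ℝ) := by
            apply one_div_le_one_div_of_le (by positivity)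
            have := hφ.le_apply (x := i)
            exact_mod_cast by omega
          linarith
        have hlim : Tendsto (fun i : ℕ => 1 / (i + 1 : ℝ) + dist (y (φ i)) k) atTop (𝓝 0) := by
          have l1 : Tendsto (fun i : ℕ => 1 / (i + 1 : ℝ)) atTop (𝓝 0) :=
            tendsto_one_div_add_atTop_nhds_zero_nat
          have l2 : Tendsto (fun i => dist (y (φ i)) k) atTop (𝓝 0) := by
            rw [← tendsto_iff_dist_tendsto_zero]
            exact hyk
          simpa using l1.add l2
        exact squeeze_zero (fun i => dist_nonneg) hbound hlim
      have hkZ : k ∈ Z g := (hZclosed g).mem_of_tendsto hzk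
        (Eventually.of_forall fun i => hz (φ i))
      exact hgK k hkZ hkK
    -- witness selection
    have hsel : ∀ g, g ∈ A → (Z g).Nonempty → (∀ x ∈ Z g, x ∉ K) →
        ∃ z, z ∈ Z g ∧ ∀ M : ℕ, g ∉ G M → ∃ y ∈ K, dist z y < 1 / (M + 1 : ℝ) := by
      intro g hgA hgne hgK
      obtain ⟨m₀, hm₀, hmin⟩ : ∃ m, g ∈ G m ∧ ∀ j, g ∈ G j → m ≤ j := by
        have hex := hmem g hgA hgne hgK
        exact ⟨Nat.find hex, Nat.find_spec hex, fun j hj => Nat.find_min' hex hj⟩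
      cases m₀ with
      | zero =>
        exact ⟨hgne.choose, hgne.choose_spec, fun M hM =>
          absurd (hGmono (Nat.zero_le M) hm₀) hM⟩
      | succ M₀ =>
        have hnot : g ∉ G M₀ := fun h => by have := hmin M₀ h; omega
        have h' : ∃ z ∈ Z g, ∃ y ∈ K, dist z y < 1 / (M₀ + 1 : ℝ) := by
          simp only [hG_def, Set.mem_setOf_eq, not_and] at hnot
          have := hnot hgA hgne
          push_neg at this
          exact this
        obtain ⟨z, hzZ, y0, hy0, hzy0⟩ := h'
        refine ⟨z, hzZ, fun M hM => ?_⟩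
        have hMle : M ≤ M₀ := by
          by_contra hcon2
          push_neg at hcon2
          exact hM (hGmono hcon2 hm₀)
        refine ⟨y0, hy0, lt_of_lt_of_le hzy0 ?_⟩
        apply one_div_le_one_div_of_le (by positivity)
        exact_mod_cast by omega
    choose! wit hwitZ hwitP using hsel
    -- the compact trap
    set C : Set X := K ∪ (⋃ (g : C(X, Y)) (_ : g ∈ A ∧ (Z g).Nonempty ∧ ∀ x ∈ Z g, x ∉ K),
      {wit g}) with hC_def
    have hCK : K ⊆ C := subset_union_left
    have hCsub : ∀ g, (g ∈ A ∧ (Z g).Nonempty ∧ ∀ x ∈ Z g, x ∉ K) → wit g ∈ C := by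
      intro g hg
      exact subset_union_right (mem_iUnion₂.2 ⟨g, hg, rfl⟩)
    have hCcomp : IsCompact C := by
      rw [isCompact_iff_finite_subcover]
      intro ι U hUo hCov
      obtain ⟨t₀, ht₀⟩ := hK.elim_finite_subcover U hUo (hCK.trans hCov)
      set W : Set X := ⋃ i ∈ t₀, U i with hW_def
      have hWopen : IsOpen W := isOpen_biUnion fun i _ => hUo i
      have hEbound : ∃ M : ℕ, ∀ g, (g ∈ A ∧ (Z g).Nonempty ∧ (∀ x ∈ Z g, x ∉ K)) →
          wit g ∉ W → g ∈ G M := by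
        by_contra h
        push_neg at h
        choose gs hgs1 hgs2 hgs3 using h
        have hnear : ∀ M : ℕ, ∃ y ∈ K, dist (wit (gs M)) y < 1 / (M + 1 : ℝ) := fun M =>
          hwitP (gs M) (hgs1 M).1 (hgs1 M).2.1 (hgs1 M).2.2 M (hgs3 M)
        choose ys hysK hysd using hnear
        obtain ⟨k, hkK, φ, hφ, hyk⟩ := hK.tendsto_subseq hysK
        have hzk : Tendsto (fun i => wit (gs (φ i))) atTop (𝓝 k) := by
          rw [tendsto_iff_dist_tendsto_zero]
          have hbound : ∀ i, dist (wit (gs (φ i))) k ≤ 1 / (i + 1 : ℝ) + dist (ys (φ i)) k := by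
            intro i
            have h1 : dist (wit (gs (φ i))) k ≤ dist (wit (gs (φ i))) (ys (φ i))
                + dist (ys (φ i)) k := dist_triangle _ _ _
            have h2 : dist (wit (gs (φ i))) (ys (φ i)) < 1 / (φ i + 1 : ℝ) := hysd (φ i)
            have h3 : 1 / (φ i + 1 : ℝ) ≤ 1 / (i + 1 : ℝ) := by
              apply one_div_le_one_div_of_le (by positivity)
              have := hφ.le_apply (x := i)
              exact_mod_cast by omega
            linarith
          have hlim : Tendsto (fun i : ℕ => 1 / (i + 1 : ℝ) + dist (ys (φ i)) k) atTop (𝓝 0) := by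
            have l1 : Tendsto (fun i : ℕ => 1 / (i + 1 : ℝ)) atTop (𝓝 0) :=
              tendsto_one_div_add_atTop_nhds_zero_nat
            have l2 : Tendsto (fun i => dist (ys (φ i)) k) atTop (𝓝 0) := by
              rw [← tendsto_iff_dist_tendsto_zero]
              exact hyk
            simpa using l1.add l2
          exact squeeze_zero (fun i => dist_nonneg) hbound hlim
        have hkW : k ∈ W := ht₀ hkK
        have hev : ∀ᶠ i in atTop, wit (gs (φ i)) ∈ W := hzk (hWopen.mem_nhds hkW)
        obtain ⟨i, hi⟩ := hev.exists
        exact hgs2 (φ i) hi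
      obtain ⟨M, hM⟩ := hEbound
      -- the escaped witnesses form a finite set
      have hesc : {x | ∃ g, (g ∈ A ∧ (Z g).Nonempty ∧ (∀ x' ∈ Z g, x' ∉ K)) ∧
          wit g = x ∧ x ∉ W}.Finite := by
        apply ((hGfin M).image wit).subset
        rintro x ⟨g, hg, rfl, hxW⟩
        exact mem_image_of_mem wit (hM g hg hxW)
      obtain ⟨t₁, ht₁⟩ := hesc.isCompact.elim_finite_subcover U hUo (by
        rintro x ⟨g, hg, rfl, hxW⟩
        exact hCov (hCsub g hg))
      refine ⟨t₀ ∪ t₁, ?_⟩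
      intro x hx
      rcases hx with hxK | hxw
      · have : x ∈ W := ht₀ hxK
        refine mem_iUnion₂.2 ?_
        obtain ⟨i, hit, hxi⟩ := mem_iUnion₂.1 this
        exact ⟨i, Finset.mem_union_left _ hit, hxi⟩
      · obtain ⟨g, hg, hx⟩ := mem_iUnion₂.1 hxw
        rw [mem_singleton_iff] at hx
        subst hx
        by_cases hxW : wit g ∈ W
        · obtain ⟨i, hit, hxi⟩ := mem_iUnion₂.1 hxW
          exact mem_iUnion₂.2 ⟨i, Finset.mem_union_left _ hit, hxi⟩
        · have : wit g ∈ ⋃ i ∈ t₁, U i := ht₁ ⟨g, hg, rfl, hxW⟩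
          obtain ⟨i, hit, hxi⟩ := mem_iUnion₂.1 this
          exact mem_iUnion₂.2 ⟨i, Finset.mem_union_right _ hit, hxi⟩
    -- the final contradiction
    have hTmem : {g : C(X, Y) | ∀ x ∈ C, dist (f x) (g x) < (r : ℝ) / 2} ∈ 𝓝 f :=
      (hnhds f).mem_of_mem (i := (C, (r : ℝ) / 2)) ⟨hCcomp, by positivity⟩
    have hTinf := hA _ hTmem
    obtain ⟨s₀, hsc₀, hsf₀, -⟩ := cover f K hK r hr0 1 one_pos
    have hsub : {g : C(X, Y) | ∀ x ∈ C, dist (f x) (g x) < (r : ℝ) / 2} ∩ A ⊆ Ns s₀ r ∩ A := by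
      rintro g ⟨hgT, hgA⟩
      have hZC : ∀ x ∈ C, x ∉ Z g := by
        intro x hxC hxZ
        have h1 : dist (f x) (g x) < (r : ℝ) / 2 := hgT x hxC
        have h2 : (r : ℝ) / 2 ≤ dist (g x) (f x) := hxZ
        rw [dist_comm] at h2
        linarith
      have hZempty : Z g = ∅ := by
        by_contra hne
        rw [← Ne, ← nonempty_iff_ne_empty] at hne
        have hDg : ∀ x ∈ Z g, x ∉ K := fun x hx hxK => hZC x (hCK hxK) hx
        have hwZ : wit g ∈ Z g := hwitZ g hgA hne hDg
        have hwC : wit g ∈ C := hCsub g ⟨hgA, hne, hDg⟩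
        exact hZC _ hwC hwZ
      refine ⟨?_, hgA⟩
      intro p hp x hx
      have h1 : dist (g x) (f x) < (r : ℝ) / 2 := by
        by_contra hge
        push_neg at hge
        have : x ∈ Z g := hge
        rw [hZempty] at this
        exact this
      have h2 : dist (f x) (c p.2) < (r : ℝ) / 2 := hsf₀ p hp x hx
      simp only [Metric.mem_ball]
      calc dist (g x) (c p.2) ≤ dist (g x) (f x) + dist (f x) (c p.2) := dist_triangle _ _ _
        _ < (r : ℝ) := by linarith
    exact (key s₀ hsc₀ hsf₀).not_infinite (hTinf.mono hsub)

/-- For separable metrizable spaces `X, Y`, the space `C_k(X,Y)` of continuous maps with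
the compact-open topology has a countable Pytkeev network. -/
theorem compactOpen_countable_pytkeevNetwork {X Y : Type*}
    [TopologicalSpace X] [TopologicalSpace Y]
    [SeparableSpace X] [MetrizableSpace X] [SeparableSpace Y] [MetrizableSpace Y] :
    ∃ 𝒩 : Set (Set C(X, Y)), 𝒩.Countable ∧ IsPytkeevNetwork 𝒩 := by
  rcases isEmpty_or_nonempty X with hX | hX
  · refine subsingleton_pytkeevNetwork ⟨fun f g => ?_⟩
    ext x
    exact isEmptyElim x
  rcases isEmpty_or_nonempty Y with hY | hY
  · refine subsingleton_pytkeevNetwork ⟨fun f g => ?_⟩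
    ext x
    exact isEmptyElim (f x)
  letI mX : MetricSpace X := TopologicalSpace.metrizableSpaceMetric X
  letI mY : MetricSpace Y := TopologicalSpace.metrizableSpaceMetric Y
  haveI : SecondCountableTopology X := UniformSpace.secondCountable_of_separable X
  exact aux_pytkeev
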